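/- The map π' : ℍ × ℍ₀ → ℝ ⊕ ℍ₀ sending (z, z₀) to (|z|² − |z₀|², z·z₀·conj(z)) is surjective, where ℍ₀ is the space of purely imaginary quaternions. -/

import Mathlib

open scoped Quaternion

/-- The map `π' : ℍ × ℍ₀ → ℝ × ℍ₀`, `(z, z₀) ↦ (|z|² − |z₀|², z z₀ conj z)`, is
surjective: every pair `(r, q)` with `q` purely imaginary is attained. -/
theorem surjective_quaternion_mixed_pair_invariants
    (r : ℝ) (q : ℍ[ℝ]) (hq : q.re = 0) :
    ∃ z z₀ : ℍ[ℝ], z₀.re = 0 ∧ ‖z‖ ^ 2 - ‖z₀‖ ^ 2 = r ∧ z * z₀ * star z = q := by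
  by_cases hq0 : q = 0
  · rcases le_or_gt 0 r with hr | hr
    · refine ⟨(Real.sqrt r : ℍ[ℝ]), 0, by simp, ?_, by simp [hq0]⟩
      simp [Quaternion.norm_coe, Real.norm_eq_abs, abs_of_nonneg (Real.sqrt_nonneg r),
        Real.sq_sqrt hr]
    · refine ⟨0, (id ⟨0, Real.sqrt (-r), 0, 0⟩ : ℍ[ℝ]), rfl, ?_, by simp [hq0]⟩
      have h : ‖(id ⟨0, Real.sqrt (-r), 0, 0⟩ : ℍ[ℝ])‖ ^ 2 = -r := by
        rw [sq, ← Quaternion.normSq_eq_norm_mul_self, Quaternion.normSq_def']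
        have := Real.sq_sqrt (le_of_lt (neg_pos.mpr hr))
        simp only [id]
        nlinarith [this]
      rw [h]; simp
  · set c : ℝ := ‖q‖ ^ 2 with hc
    have hqn : 0 < ‖q‖ := norm_pos_iff.mpr hq0
    have hcpos : 0 < c := by positivity
    set f : ℝ → ℝ := fun t => t ^ 6 - r * t ^ 4 - c with hf
    set b : ℝ := Real.sqrt (max (r + c + 1) 1) with hb
    have hb1 : (1:ℝ) ≤ b := by
      rw [hb, show (1:ℝ) = Real.sqrt 1 from Real.sqrt_one.symm]
      exact Real.sqrt_le_sqrt (by rw [Real.sqrt_one]; exact le_max_right _ _)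
    have hb2 : r + c + 1 ≤ b ^ 2 := by
      rw [hb, Real.sq_sqrt (le_trans zero_le_one (le_max_right _ _))]
      exact le_max_left _ _
    have hfb : 0 ≤ f b := by
      have h4 : (1:ℝ) ≤ b ^ 4 := one_le_pow₀ hb1
      have hkey : 1 * (c + 1) ≤ b ^ 4 * (b ^ 2 - r) :=
        mul_le_mul h4 (by linarith) (by linarith) (by positivity)
      have : f b = b ^ 4 * (b ^ 2 - r) - c := by rw [hf]; ring
      linarith
    have hf0 : f 0 < 0 := by simp [hf]; linarith
    have hcont : ContinuousOn f (Set.Icc 0 b) := by fun_prop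
    have hiv := intermediate_value_Icc (le_trans zero_le_one hb1) hcont
    obtain ⟨t, ht, hft⟩ := hiv ⟨le_of_lt hf0, hfb⟩
    have hft' : t ^ 6 - r * t ^ 4 - ‖q‖ ^ 2 = 0 := by simpa [hf, hc] using hft
    have ht0 : t ≠ 0 := by
      rintro rfl; rw [hft] at hf0; exact lt_irrefl 0 hf0
    have htpos : 0 < t := lt_of_le_of_ne ht.1 (Ne.symm ht0)
    refine ⟨(t : ℍ[ℝ]), (t ^ 2)⁻¹ • q, by simp [hq], ?_, ?_⟩
    · have hnz : ‖(t : ℍ[ℝ])‖ = t := by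
        rw [Quaternion.norm_coe, Real.norm_eq_abs, abs_of_pos htpos]
      have hnz0 : ‖(t ^ 2)⁻¹ • q‖ = (t ^ 2)⁻¹ * ‖q‖ := by
        rw [norm_smul, Real.norm_eq_abs, abs_of_pos (by positivity)]
      rw [hnz, hnz0]
      have ht4 : t ^ 4 ≠ 0 := by positivity
      field_simp
      linear_combination hft'
    · rw [Quaternion.star_coe, Quaternion.coe_mul_eq_smul, smul_mul_assoc,
        Quaternion.mul_coe_eq_smul, smul_smul, smul_smul]
      rw [show t * t * (t ^ 2)⁻¹ = 1 by field_simp, one_smul]
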